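/- Let ρ, σ, ω be states on ℂ^d, let M > 1 be real and let ε be real with 0 ≤ ε < 1 − 1/M. Assume ½‖ρ − σ‖₁ ≤ ε and ρ ≤ Mω. Then ∫_{γ ∈ (1, M]} (E_γ(ρ‖ω) − E_γ(σ‖ω))/γ dγ ≤ −(1−ε)·log(1−ε) + ε·log M − ε, and moreover E_γ(ρ‖ω) − E_γ(σ‖ω) ≤ 0 for every γ ≥ M. -/

import Mathlib

noncomputable section

namespace QIT

open Matrix
open scoped ComplexOrder

variable {n : Type*} [Fintype n] [DecidableEq n]

/-- Trace norm of a matrix: sum of absolute values of eigenvalues (0 if not Hermitian). -/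
def traceNorm (X : Matrix n n ℂ) : ℝ :=
  if h : X.IsHermitian then ∑ i, |h.eigenvalues i| else 0

/-- Trace of the positive part: sum of positive eigenvalues (0 if not Hermitian). -/
def trPos (X : Matrix n n ℂ) : ℝ :=
  if h : X.IsHermitian then ∑ i, max (h.eigenvalues i) 0 else 0

/-- Matrix logarithm via functional calculus (with log 0 = 0); 0 if not Hermitian. -/
def mlog (X : Matrix n n ℂ) : Matrix n n ℂ :=
  if h : X.IsHermitian then
    (h.eigenvectorUnitary : Matrix n n ℂ) *
      Matrix.diagonal (fun i => (Real.log (h.eigenvalues i) : ℂ)) *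
      (star (h.eigenvectorUnitary : Matrix n n ℂ))
  else 0

/-- Umegaki relative entropy D(ρ‖ω) = Tr ρ (log ρ - log ω). -/
def relEnt (ρ ω : Matrix n n ℂ) : ℝ :=
  ((ρ * (mlog ρ - mlog ω)).trace).re

/-- Von Neumann entropy. -/
def vN (ρ : Matrix n n ℂ) : ℝ :=
  if h : ρ.IsHermitian then -∑ i, (h.eigenvalues i) * Real.log (h.eigenvalues i) else 0

/-- A quantum state: positive semidefinite with unit trace. -/
def IsState (ρ : Matrix n n ℂ) : Prop := ρ.PosSemidef ∧ ρ.trace = 1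

/-- Binary entropy. -/
def binH (ε : ℝ) : ℝ := -(ε * Real.log ε) - (1 - ε) * Real.log (1 - ε)

/-- g(x) = (1+x)log(1+x) - x log x. -/
def gfun (x : ℝ) : ℝ := (1 + x) * Real.log (1 + x) - x * Real.log x


set_option linter.unusedSectionVars false

lemma psd_diag_nonneg {A : Matrix n n ℂ} (hA : A.PosSemidef) (i : n) : 0 ≤ A i i := by
  have := hA.dotProduct_mulVec_nonneg (Pi.single i 1)
  simpa [Matrix.mulVec_single, dotProduct, Pi.single_apply, Finset.sum_ite_eq] using this

lemma trace_mul_eq {A : Matrix n n ℂ} (hA : A.IsHermitian) (P : Matrix n n ℂ) :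
    (A * P).trace = ∑ i, (hA.eigenvalues i : ℂ) *
      ((star (hA.eigenvectorUnitary : Matrix n n ℂ) * P * (hA.eigenvectorUnitary : Matrix n n ℂ)) i i) := by
  set U : Matrix n n ℂ := (hA.eigenvectorUnitary : Matrix n n ℂ) with hUdef
  set D : Matrix n n ℂ := Matrix.diagonal (RCLike.ofReal ∘ hA.eigenvalues) with hDdef
  have h1 : A * P = (U * D) * (star U * P) := by
    conv_lhs => rw [hA.spectral_theorem, Unitary.conjStarAlgAut_apply]
    simp only [Matrix.mul_assoc]
    rfl
  rw [h1, Matrix.trace_mul_comm, ← Matrix.mul_assoc]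
  rw [show (star U * P * U * D).trace = ∑ i, ((star U * P * U) * D) i i from rfl]
  refine Finset.sum_congr rfl fun i _ => ?_
  rw [hDdef, Matrix.mul_diagonal]
  exact mul_comm _ _

/-- Key lemma A: for 0 ≤ P ≤ 1, Re Tr(A P) ≤ trPos A. -/
lemma re_trace_mul_le_trPos {A P : Matrix n n ℂ} (hA : A.IsHermitian)
    (hP : P.PosSemidef) (hP1 : (1 - P).PosSemidef) :
    ((A * P).trace).re ≤ trPos A := by
  rw [trPos, dif_pos hA, trace_mul_eq hA P, Complex.re_sum]
  set U : Matrix n n ℂ := (hA.eigenvectorUnitary : Matrix n n ℂ) with hUdef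
  have hU' : star U * U = 1 := Matrix.mem_unitaryGroup_iff'.mp hA.eigenvectorUnitary.2
  set Q : Matrix n n ℂ := star U * P * U with hQdef
  have hQ : Q.PosSemidef := hP.conjTranspose_mul_mul_same U
  have hQ1 : (1 - Q).PosSemidef := by
    have : (1 : Matrix n n ℂ) - Q = star U * (1 - P) * U := by
      rw [Matrix.mul_sub, Matrix.sub_mul, Matrix.mul_one, hU', hQdef]
    rw [this]
    exact hP1.conjTranspose_mul_mul_same U
  refine Finset.sum_le_sum fun i _ => ?_
  have h0 : 0 ≤ (Q i i).re := (Complex.le_def.mp (psd_diag_nonneg hQ i)).1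
  have h1 : (Q i i).re ≤ 1 := by
    have := (Complex.le_def.mp (psd_diag_nonneg hQ1 i)).1
    simp only [Matrix.sub_apply, Matrix.one_apply_eq, Complex.sub_re, Complex.one_re,
      Complex.zero_re] at this
    linarith
  rw [Complex.re_ofReal_mul]
  rcases le_or_gt (hA.eigenvalues i) 0 with h | h
  · have : hA.eigenvalues i * (Q i i).re ≤ 0 := mul_nonpos_of_nonpos_of_nonneg h h0
    simpa [max_eq_right h] using this
  · calc hA.eigenvalues i * (Q i i).re ≤ hA.eigenvalues i * 1 := by
          exact mul_le_mul_of_nonneg_left h1 h.le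
    _ = hA.eigenvalues i := mul_one _
    _ ≤ max (hA.eigenvalues i) 0 := le_max_left _ _

/-- Key lemma B: there is a projection achieving trPos. -/
lemma exists_proj_trPos {A : Matrix n n ℂ} (hA : A.IsHermitian) :
    ∃ P : Matrix n n ℂ, P.PosSemidef ∧ (1 - P).PosSemidef ∧ ((A * P).trace).re = trPos A := by
  set U : Matrix n n ℂ := (hA.eigenvectorUnitary : Matrix n n ℂ) with hUdef
  have hU : U * star U = 1 := Matrix.mem_unitaryGroup_iff.mp hA.eigenvectorUnitary.2
  have hU' : star U * U = 1 := Matrix.mem_unitaryGroup_iff'.mp hA.eigenvectorUnitary.2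
  set f : n → ℂ := fun i => if 0 < hA.eigenvalues i then 1 else 0 with hf
  refine ⟨U * Matrix.diagonal f * star U, ?_, ?_, ?_⟩
  · refine Matrix.PosSemidef.mul_mul_conjTranspose_same ?_ U
    refine Matrix.posSemidef_diagonal_iff.mpr fun i => ?_
    by_cases h : 0 < hA.eigenvalues i <;> simp [hf, h]
  · have hd : (1 : Matrix n n ℂ) - Matrix.diagonal f = Matrix.diagonal (fun i => 1 - f i) := by
      ext i j
      by_cases h : i = j <;> simp [Matrix.diagonal, Matrix.one_apply, h]
    have : (1 : Matrix n n ℂ) - U * Matrix.diagonal f * star U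
        = U * ((1 : Matrix n n ℂ) - Matrix.diagonal f) * star U := by
      rw [Matrix.mul_sub, Matrix.sub_mul, Matrix.mul_one, hU]
    rw [this, hd]
    refine Matrix.PosSemidef.mul_mul_conjTranspose_same ?_ U
    refine Matrix.posSemidef_diagonal_iff.mpr fun i => ?_
    by_cases h : 0 < hA.eigenvalues i <;> simp [hf, h]
  · rw [trace_mul_eq hA, trPos, dif_pos hA, Complex.re_sum]
    refine Finset.sum_congr rfl fun i _ => ?_
    have : star U * (U * Matrix.diagonal f * star U) * U = Matrix.diagonal f := by
      rw [← Matrix.mul_assoc, ← Matrix.mul_assoc, hU', Matrix.one_mul, Matrix.mul_assoc,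
        hU', Matrix.mul_one]
    rw [this]
    by_cases h : 0 < hA.eigenvalues i
    · simp [hf, h, max_eq_left h.le]
    · simp [hf, h, max_eq_right (not_lt.mp h)]

lemma psd_trace_re_nonneg {A : Matrix n n ℂ} (hA : A.PosSemidef) : 0 ≤ A.trace.re := by
  have h : (0:ℂ) ≤ A.trace := Finset.sum_nonneg fun i _ => psd_diag_nonneg hA i
  exact (Complex.le_def.mp h).1

lemma trace_mul_re_nonneg {A B : Matrix n n ℂ} (hA : A.PosSemidef) (hB : B.PosSemidef) :
    0 ≤ ((A * B).trace).re := by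
  obtain ⟨C, rfl⟩ : ∃ C : Matrix n n ℂ, B = Cᴴ * C := by
    open scoped MatrixOrder in
    obtain ⟨C, hC⟩ := CStarAlgebra.nonneg_iff_eq_star_mul_self.mp hB.nonneg
    exact ⟨C, hC⟩
  rw [show A * (Cᴴ * C) = A * Cᴴ * C from (Matrix.mul_assoc _ _ _).symm, Matrix.trace_mul_cycle]
  exact psd_trace_re_nonneg (hA.mul_mul_conjTranspose_same C)

lemma trPos_nonneg (X : Matrix n n ℂ) : 0 ≤ trPos X := by
  rw [trPos]
  split
  · exact Finset.sum_nonneg fun i _ => le_max_right _ _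
  · exact le_refl 0

lemma trPos_mono {A B : Matrix n n ℂ} (hA : A.IsHermitian) (hB : B.IsHermitian)
    (h : (B - A).PosSemidef) : trPos A ≤ trPos B := by
  obtain ⟨P, hP, hP1, hPe⟩ := exists_proj_trPos hA
  rw [← hPe]
  have h1 : ((B * P).trace).re ≤ trPos B := re_trace_mul_le_trPos hB hP hP1
  have h2 : 0 ≤ (((B - A) * P).trace).re := trace_mul_re_nonneg h hP
  rw [Matrix.sub_mul, Matrix.trace_sub, Complex.sub_re] at h2
  linarith

lemma trPos_sub_le {A B : Matrix n n ℂ} (hA : A.IsHermitian) (hB : B.IsHermitian) :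
    trPos A ≤ trPos (A - B) + trPos B := by
  obtain ⟨P, hP, hP1, hPe⟩ := exists_proj_trPos hA
  rw [← hPe]
  have e : A * P = (A - B) * P + B * P := by rw [Matrix.sub_mul, sub_add_cancel]
  rw [e, Matrix.trace_add, Complex.add_re]
  exact add_le_add (re_trace_mul_le_trPos (hA.sub hB) hP hP1)
    (re_trace_mul_le_trPos hB hP hP1)

lemma trPos_nonpos {A : Matrix n n ℂ} (h : (-A).PosSemidef) : trPos A ≤ 0 := by
  have hA : A.IsHermitian := by simpa using h.isHermitian.neg
  obtain ⟨P, hP, hP1, hPe⟩ := exists_proj_trPos hA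
  rw [← hPe]
  have h2 : 0 ≤ ((-A * P).trace).re := trace_mul_re_nonneg h hP
  rw [Matrix.neg_mul, Matrix.trace_neg, Complex.neg_re] at h2
  linarith

lemma trPos_le_trace_re {A : Matrix n n ℂ} (hA : A.PosSemidef) : trPos A ≤ A.trace.re := by
  obtain ⟨P, hP, hP1, hPe⟩ := exists_proj_trPos hA.1
  rw [← hPe]
  have h2 : 0 ≤ ((A * (1 - P)).trace).re := trace_mul_re_nonneg hA hP1
  rw [Matrix.mul_sub, Matrix.mul_one, Matrix.trace_sub, Complex.sub_re] at h2
  linarith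

lemma isHermitian_real_smul {A : Matrix n n ℂ} (hA : A.IsHermitian) (c : ℝ) :
    ((c : ℂ) • A).IsHermitian := by
  rw [Matrix.IsHermitian, Matrix.conjTranspose_smul, hA.eq, Complex.star_def,
    Complex.conj_ofReal]

lemma psd_real_smul {A : Matrix n n ℂ} (hA : A.PosSemidef) {c : ℝ} (hc : 0 ≤ c) :
    ((c : ℂ) • A).PosSemidef := by
  refine Matrix.PosSemidef.of_dotProduct_mulVec_nonneg (isHermitian_real_smul hA.1 c) fun x => ?_
  rw [Matrix.smul_mulVec, dotProduct_smul, smul_eq_mul]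
  exact mul_nonneg (by exact_mod_cast Complex.zero_le_real.mpr hc) (hA.dotProduct_mulVec_nonneg x)

lemma sum_eigenvalues_eq_trace_re {A : Matrix n n ℂ} (hA : A.IsHermitian) :
    ∑ i, hA.eigenvalues i = A.trace.re := by
  have h := trace_mul_eq hA 1
  have hU' : star (hA.eigenvectorUnitary : Matrix n n ℂ) * (hA.eigenvectorUnitary : Matrix n n ℂ)
      = 1 := Matrix.mem_unitaryGroup_iff'.mp hA.eigenvectorUnitary.2
  rw [Matrix.mul_one] at h
  simp only [Matrix.mul_one, hU'] at h
  rw [h, Complex.re_sum]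
  refine (Finset.sum_congr rfl fun i _ => ?_).symm
  simp [Matrix.one_apply]

lemma trPos_eq_traceNorm_div_two {A : Matrix n n ℂ} (hA : A.IsHermitian)
    (h0 : A.trace = 0) : trPos A = traceNorm A / 2 := by
  rw [trPos, traceNorm, dif_pos hA, dif_pos hA]
  have hs : ∑ i, hA.eigenvalues i = 0 := by
    rw [sum_eigenvalues_eq_trace_re hA, h0, Complex.zero_re]
  have : ∀ x : ℝ, max x 0 = (x + |x|) / 2 := by
    intro x
    rcases le_total 0 x with h | h
    · rw [max_eq_left h, abs_of_nonneg h]; ring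
    · rw [max_eq_right h, abs_of_nonpos h]; ring
  rw [Finset.sum_congr rfl fun i _ => this _]
  rw [← Finset.sum_div, Finset.sum_add_distrib, hs, zero_add]

/-- trace of a real scalar multiple of a state. -/
lemma trace_re_real_smul {ρ : Matrix n n ℂ} (ht : ρ.trace = 1) (c : ℝ) :
    (((c : ℂ) • ρ).trace).re = c := by
  rw [Matrix.trace_smul, ht, smul_eq_mul, mul_one, Complex.ofReal_re]

lemma trPos_real_smul_le {ρ : Matrix n n ℂ} (hρ : ρ.PosSemidef) (ht : ρ.trace = 1)
    {c : ℝ} (hc : 0 ≤ c) : trPos ((c : ℂ) • ρ) ≤ c := by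
  calc trPos ((c : ℂ) • ρ) ≤ (((c : ℂ) • ρ).trace).re := trPos_le_trace_re (psd_real_smul hρ hc)
  _ = c := trace_re_real_smul ht c

/-- Lipschitz continuity of γ ↦ trPos (ρ - γ ω). -/
lemma lipschitz_trPos {ρ ω : Matrix n n ℂ} (hρ : ρ.PosSemidef) (hω : ω.PosSemidef)
    (hωt : ω.trace = 1) :
    LipschitzWith 1 (fun γ : ℝ => trPos (ρ - (γ : ℂ) • ω)) := by
  have herm : ∀ γ : ℝ, (ρ - (γ : ℂ) • ω).IsHermitian :=
    fun γ => hρ.1.sub (isHermitian_real_smul hω.1 γ)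
  have key : ∀ γ₁ γ₂ : ℝ, γ₁ ≤ γ₂ →
      trPos (ρ - (γ₂ : ℂ) • ω) ≤ trPos (ρ - (γ₁ : ℂ) • ω) ∧
      trPos (ρ - (γ₁ : ℂ) • ω) ≤ trPos (ρ - (γ₂ : ℂ) • ω) + (γ₂ - γ₁) := by
    intro γ₁ γ₂ h12
    have e : ρ - (γ₁ : ℂ) • ω - (ρ - (γ₂ : ℂ) • ω) = ((γ₂ - γ₁ : ℝ) : ℂ) • ω := by
      push_cast
      module
    have hpsd : (((γ₂ - γ₁ : ℝ) : ℂ) • ω).PosSemidef := psd_real_smul hω (by linarith)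
    constructor
    · exact trPos_mono (herm γ₂) (herm γ₁) (e ▸ hpsd)
    · calc trPos (ρ - (γ₁ : ℂ) • ω)
          ≤ trPos (ρ - (γ₁ : ℂ) • ω - (ρ - (γ₂ : ℂ) • ω)) + trPos (ρ - (γ₂ : ℂ) • ω) :=
            trPos_sub_le (herm γ₁) (herm γ₂)
      _ ≤ (γ₂ - γ₁) + trPos (ρ - (γ₂ : ℂ) • ω) := by
            rw [e]
            exact add_le_add (trPos_real_smul_le hω hωt (by linarith)) le_rfl
      _ = trPos (ρ - (γ₂ : ℂ) • ω) + (γ₂ - γ₁) := add_comm _ _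
  refine LipschitzWith.of_dist_le_mul fun x y => ?_
  rw [NNReal.coe_one, one_mul, Real.dist_eq, Real.dist_eq]
  rcases le_total x y with h | h
  · obtain ⟨h1, h2⟩ := key x y h
    rw [abs_of_nonpos (by linarith : x - y ≤ 0)]
    rw [abs_le]
    constructor <;> linarith
  · obtain ⟨h1, h2⟩ := key y x h
    rw [abs_of_nonneg (by linarith : 0 ≤ x - y)]
    rw [abs_le]
    constructor <;> linarith

open MeasureTheory in
/-- bound on the first integral in the proof of the semi-continuity theorem. -/
theorem first_integral_bound
    {d : ℕ} (ρ σ ω : Matrix (Fin d) (Fin d) ℂ)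
    (hρ : IsState ρ) (hσ : IsState σ) (hω : IsState ω)
    (M ε : ℝ) (hM : 1 < M) (hε0 : 0 ≤ ε) (hε1 : ε < 1 - 1 / M)
    (htr : traceNorm (ρ - σ) / 2 ≤ ε)
    (hop : ((M : ℂ) • ω - ρ).PosSemidef) :
    (∫ γ in Set.Ioc (1 : ℝ) M,
        (trPos (ρ - (γ : ℂ) • ω) - trPos (σ - (γ : ℂ) • ω)) / γ)
      ≤ -(1 - ε) * Real.log (1 - ε) + ε * Real.log M - ε ∧
    ∀ γ : ℝ, M ≤ γ →
      trPos (ρ - (γ : ℂ) • ω) - trPos (σ - (γ : ℂ) • ω) ≤ 0 := by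
  have hM0 : (0:ℝ) < M := by linarith
  have hεlt1 : ε < 1 := by
    have : (0:ℝ) < 1 / M := by positivity
    linarith
  have h1ε : (0:ℝ) < 1 - ε := by linarith
  -- hermitian helpers
  have hermρ : ∀ γ : ℝ, (ρ - (γ : ℂ) • ω).IsHermitian :=
    fun γ => hρ.1.1.sub (isHermitian_real_smul hω.1.1 γ)
  have hermσ : ∀ γ : ℝ, (σ - (γ : ℂ) • ω).IsHermitian :=
    fun γ => hσ.1.1.sub (isHermitian_real_smul hω.1.1 γ)
  -- second claim first
  have second : ∀ γ : ℝ, M ≤ γ →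
      trPos (ρ - (γ : ℂ) • ω) - trPos (σ - (γ : ℂ) • ω) ≤ 0 := by
    intro γ hγ
    have hneg : (-(ρ - (γ : ℂ) • ω)).PosSemidef := by
      have e : -(ρ - (γ : ℂ) • ω) = ((M : ℂ) • ω - ρ) + ((γ - M : ℝ) : ℂ) • ω := by
        push_cast
        module
      rw [e]
      exact hop.add (psd_real_smul hω.1 (by linarith))
    have h1 : trPos (ρ - (γ : ℂ) • ω) ≤ 0 := trPos_nonpos hneg
    have h2 : 0 ≤ trPos (σ - (γ : ℂ) • ω) := trPos_nonneg _
    linarith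
  refine ⟨?_, second⟩
  -- the difference is ≤ ε
  have hdiffε : ∀ γ : ℝ,
      trPos (ρ - (γ : ℂ) • ω) - trPos (σ - (γ : ℂ) • ω) ≤ ε := by
    intro γ
    have e : ρ - (γ : ℂ) • ω - (σ - (γ : ℂ) • ω) = ρ - σ := by module
    have h := trPos_sub_le (hermρ γ) (hermσ γ)
    rw [e] at h
    have htr0 : (ρ - σ).trace = 0 := by
      rw [Matrix.trace_sub, hρ.2, hσ.2, sub_self]
    have : trPos (ρ - σ) = traceNorm (ρ - σ) / 2 :=
      trPos_eq_traceNorm_div_two (hρ.1.1.sub hσ.1.1) htr0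
    linarith
  -- the difference is ≤ 1 - γ/M for γ ∈ [0, M]
  have hdiffM : ∀ γ : ℝ, 0 ≤ γ → γ ≤ M →
      trPos (ρ - (γ : ℂ) • ω) - trPos (σ - (γ : ℂ) • ω) ≤ 1 - γ / M := by
    intro γ hγ0 hγM
    have hc : (0:ℝ) ≤ 1 - γ / M := by
      rw [sub_nonneg, div_le_one hM0]
      exact hγM
    have e : ((1 - γ / M : ℝ) : ℂ) • ρ - (ρ - (γ : ℂ) • ω)
        = ((γ / M : ℝ) : ℂ) • ((M : ℂ) • ω - ρ) := by
      have hMne : (M : ℂ) ≠ 0 := by exact_mod_cast ne_of_gt hM0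
      push_cast
      rw [smul_sub, smul_smul]
      rw [div_mul_cancel₀ _ hMne]
      module
    have h1 : trPos (ρ - (γ : ℂ) • ω) ≤ trPos (((1 - γ / M : ℝ) : ℂ) • ρ) :=
      trPos_mono (hermρ γ) (isHermitian_real_smul hρ.1.1 _)
        (e ▸ psd_real_smul hop (by positivity))
    have h2 : trPos (((1 - γ / M : ℝ) : ℂ) • ρ) ≤ 1 - γ / M :=
      trPos_real_smul_le hρ.1 hρ.2 hc
    have h3 : 0 ≤ trPos (σ - (γ : ℂ) • ω) := trPos_nonneg _
    linarith
  -- continuity / integrability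
  have hLρ := lipschitz_trPos hρ.1 hω.1 hω.2
  have hLσ := lipschitz_trPos hσ.1 hω.1 hω.2
  set F : ℝ → ℝ := fun γ => (trPos (ρ - (γ : ℂ) • ω) - trPos (σ - (γ : ℂ) • ω)) / γ with hF
  set g : ℝ → ℝ := fun γ => min ε (1 - γ / M) / γ with hg
  have hFcont : ContinuousOn F (Set.Icc 1 M) := by
    apply ContinuousOn.div
    · exact ((hLρ.continuous.sub hLσ.continuous)).continuousOn
    · exact continuousOn_id
    · intro x hx
      have : (1:ℝ) ≤ x := hx.1
      positivity
  have hgcont : ContinuousOn g (Set.Icc 1 M) := by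
    apply ContinuousOn.div
    · exact (continuous_const.min (continuous_const.sub (continuous_id.div_const M))).continuousOn
    · exact continuousOn_id
    · intro x hx
      have : (1:ℝ) ≤ x := hx.1
      positivity
  have hFint : IntegrableOn F (Set.Ioc 1 M) :=
    (hFcont.integrableOn_Icc).mono_set Set.Ioc_subset_Icc_self
  have hgint : IntegrableOn g (Set.Ioc 1 M) :=
    (hgcont.integrableOn_Icc).mono_set Set.Ioc_subset_Icc_self
  have hbound : ∀ x ∈ Set.Ioc (1:ℝ) M, F x ≤ g x := by
    intro x hx
    have hx0 : (0:ℝ) < x := lt_trans one_pos hx.1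
    exact div_le_div_of_nonneg_right
      (le_min (hdiffε x) (hdiffM x (by linarith [hx.1]) hx.2)) hx0.le
  set t : ℝ := M * (1 - ε) with ht
  have h1t : 1 < t := by
    have h' : 1 / M < 1 - ε := by linarith
    calc (1:ℝ) = M * (1 / M) := by field_simp
    _ < M * (1 - ε) := by
        exact mul_lt_mul_of_pos_left h' hM0
  have htM : t ≤ M := by nlinarith
  have ht0 : (0:ℝ) < t := by linarith
  have hsub1 : Set.Ioc (1:ℝ) t ⊆ Set.Ioc 1 M := Set.Ioc_subset_Ioc_right htM
  have hsub2 : Set.Ioc t M ⊆ Set.Ioc (1:ℝ) M := Set.Ioc_subset_Ioc_left h1t.le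
  have step1 : (∫ γ in Set.Ioc (1 : ℝ) M, F γ) ≤ ∫ γ in Set.Ioc (1 : ℝ) M, g γ :=
    setIntegral_mono_on hFint hgint measurableSet_Ioc hbound
  have hsplit : (∫ γ in Set.Ioc (1:ℝ) M, g γ)
      = (∫ γ in Set.Ioc (1:ℝ) t, g γ) + ∫ γ in Set.Ioc t M, g γ := by
    rw [← Set.Ioc_union_Ioc_eq_Ioc h1t.le htM]
    exact setIntegral_union (Set.Ioc_disjoint_Ioc_of_le le_rfl) measurableSet_Ioc
      (hgint.mono_set hsub1) (hgint.mono_set hsub2)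
  have e1 : (∫ γ in Set.Ioc (1:ℝ) t, g γ) = ε * Real.log t := by
    have hcg : (∫ γ in Set.Ioc (1:ℝ) t, g γ) = ∫ γ in Set.Ioc (1:ℝ) t, ε * γ⁻¹ := by
      refine setIntegral_congr_fun measurableSet_Ioc fun x hx => ?_
      have hx0 : (0:ℝ) < x := lt_trans one_pos hx.1
      have hmin : ε ≤ 1 - x / M := by
        have : x / M ≤ 1 - ε := by
          rw [div_le_iff₀ hM0]
          calc x ≤ t := hx.2
          _ = (1 - ε) * M := by rw [ht]; ring
        linarith
      simp only [hg]
      rw [min_eq_left hmin, div_eq_mul_inv, mul_comm]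
    rw [hcg, ← intervalIntegral.integral_of_le h1t.le, intervalIntegral.integral_const_mul,
      integral_inv (by rw [Set.uIcc_of_le h1t.le]; rintro ⟨h0, -⟩; linarith), div_one]
  have e2 : (∫ γ in Set.Ioc t M, g γ) = Real.log (M / t) - (M - t) * M⁻¹ := by
    have hcg : (∫ γ in Set.Ioc t M, g γ) = ∫ γ in Set.Ioc t M, (γ⁻¹ - M⁻¹) := by
      refine setIntegral_congr_fun measurableSet_Ioc fun x hx => ?_
      have hx0 : (0:ℝ) < x := lt_trans ht0 hx.1
      have hmin : 1 - x / M ≤ ε := by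
        have : (1 - ε) * M ≤ x := by
          calc (1 - ε) * M = t := by rw [ht]; ring
          _ ≤ x := hx.1.le
        have : 1 - ε ≤ x / M := by rw [le_div_iff₀ hM0]; linarith
        linarith
      simp only [hg]
      rw [min_eq_right hmin]
      field_simp
    have hinv : IntervalIntegrable (fun x : ℝ => x⁻¹) volume t M := by
      refine intervalIntegral.intervalIntegrable_inv (fun x hx => ?_) continuousOn_id
      rw [Set.uIcc_of_le htM] at hx
      exact ne_of_gt (lt_of_lt_of_le ht0 hx.1)
    rw [hcg, ← intervalIntegral.integral_of_le htM,
      intervalIntegral.integral_sub hinv (intervalIntegrable_const),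
      integral_inv (by rw [Set.uIcc_of_le htM]; rintro ⟨h0, -⟩; linarith),
      intervalIntegral.integral_const, smul_eq_mul]
  have hlogt : Real.log t = Real.log M + Real.log (1 - ε) := Real.log_mul (ne_of_gt hM0) (ne_of_gt h1ε)
  have hlogMt : Real.log (M / t) = Real.log M - Real.log t := Real.log_div (ne_of_gt hM0) (ne_of_gt ht0)
  have hMt : (M - t) * M⁻¹ = ε := by
    rw [ht]
    field_simp
    ring
  calc (∫ γ in Set.Ioc (1 : ℝ) M, F γ) ≤ ∫ γ in Set.Ioc (1 : ℝ) M, g γ := step1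
  _ = ε * Real.log t + (Real.log (M / t) - (M - t) * M⁻¹) := by rw [hsplit, e1, e2]
  _ = -(1 - ε) * Real.log (1 - ε) + ε * Real.log M - ε := by
      rw [hlogMt, hlogt, hMt]
      ring

end QIT
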